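/- Let $N\ge 2$ be an integer, $r>0$ and $0<\alpha\le 1/r$. Equality $\int_0^{r} t (1-\alpha t)^{N-1}\,dt = \frac{N}{N+1} \left(\int_0^{r} (1-\alpha t)^{N-1}\,dt\right)^2$ holds if and only if $\alpha = 1/r$. -/

import Mathlib

lemma aux_geom (b : ℝ) (hb0 : 0 < b) (hb1 : b < 1) (N : ℕ) (hN : 2 ≤ N) :
    1 - b ^ N < N * (1 - b) := by
  have hsum : (∑ i ∈ Finset.range N, b ^ i) < N := by
    calc (∑ i ∈ Finset.range N, b ^ i) < ∑ i ∈ Finset.range N, (1:ℝ) := by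
          apply Finset.sum_lt_sum
          · intro i _
            exact pow_le_one₀ hb0.le hb1.le
          · refine ⟨1, Finset.mem_range.2 (by omega), by simpa using hb1⟩
      _ = N := by simp
  have hgeo : 1 - b ^ N = (1 - b) * ∑ i ∈ Finset.range N, b ^ i := by
    have := geom_sum_mul b N
    nlinarith [this]
  have h1b : 0 < 1 - b := by linarith
  calc 1 - b ^ N = (1 - b) * ∑ i ∈ Finset.range N, b ^ i := hgeo
    _ < (1 - b) * N := mul_lt_mul_of_pos_left hsum h1b
    _ = N * (1 - b) := by ring

theorem stmt_1 (N : ℕ) (hN : 2 ≤ N) (r α : ℝ) (hr : 0 < r) (hα : 0 < α)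
    (hαr : α ≤ 1 / r) :
    (∫ t in (0:ℝ)..r, t * (1 - α * t) ^ (N - 1)) =
      ((N : ℝ) / (N + 1)) * (∫ t in (0:ℝ)..r, (1 - α * t) ^ (N - 1)) ^ 2 ↔
    α = 1 / r := by
  have hα0 : α ≠ 0 := ne_of_gt hα
  have hNpos : (0:ℝ) < N := by positivity
  have hN0 : (N : ℝ) ≠ 0 := ne_of_gt hNpos
  have hN1 : (N : ℝ) + 1 ≠ 0 := by positivity
  set b : ℝ := 1 - α * r with hbdef
  have hb0 : 0 ≤ b := by
    have : α * r ≤ 1 := by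
      have := mul_le_mul_of_nonneg_right hαr hr.le
      rwa [one_div, inv_mul_cancel₀ hr.ne'] at this
    simp [hbdef]; linarith
  have hb1 : b < 1 := by
    have : 0 < α * r := mul_pos hα hr
    simp [hbdef]; linarith
  -- derivative of linear part
  have hlin : ∀ t : ℝ, HasDerivAt (fun t : ℝ => 1 - α * t) (-α) t := by
    intro t
    have h := ((hasDerivAt_id' t).const_mul α).const_sub (1:ℝ)
    rwa [mul_one] at h
  have hNsub : N - 1 + 1 = N := by omega
  -- first integral
  have hF : ∀ t : ℝ, HasDerivAt (fun t : ℝ => -(1 - α * t) ^ N / (α * N))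
      ((1 - α * t) ^ (N - 1)) t := by
    intro t
    have h2 := ((hlin t).pow N).neg.div_const (α * N)
    refine h2.congr_deriv ?_
    rw [← hNsub]
    push_cast
    field_simp
  have hcont1 : Continuous fun t : ℝ => (1 - α * t) ^ (N - 1) :=
    (continuous_const.sub (continuous_const.mul continuous_id)).pow _
  have hI1 : (∫ t in (0:ℝ)..r, (1 - α * t) ^ (N - 1)) = (1 - b ^ N) / (α * N) := by
    rw [intervalIntegral.integral_eq_sub_of_hasDerivAt (fun t _ => hF t)
      (hcont1.intervalIntegrable _ _)]
    simp [hbdef]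
    ring
  -- second integral
  have hG : ∀ t : ℝ, HasDerivAt
      (fun t : ℝ => (1 - α * t) ^ (N + 1) / (α ^ 2 * (N + 1)) - (1 - α * t) ^ N / (α ^ 2 * N))
      (t * (1 - α * t) ^ (N - 1)) t := by
    intro t
    have h2 := (((hlin t).pow (N + 1)).div_const (α ^ 2 * (N + 1))).sub
      (((hlin t).pow N).div_const (α ^ 2 * N))
    refine h2.congr_deriv ?_
    have hN2 : N + 1 - 1 = N := by omega
    rw [hN2, ← hNsub]
    push_cast
    field_simp
    ring
  have hcont2 : Continuous fun t : ℝ => t * (1 - α * t) ^ (N - 1) :=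
    continuous_id.mul hcont1
  have hI2 : (∫ t in (0:ℝ)..r, t * (1 - α * t) ^ (N - 1)) =
      (b ^ N * b - 1) / (α ^ 2 * (N + 1)) - (b ^ N - 1) / (α ^ 2 * N) := by
    rw [intervalIntegral.integral_eq_sub_of_hasDerivAt (fun t _ => hG t)
      (hcont2.intervalIntegrable _ _)]
    simp [hbdef, pow_succ]
    field_simp
    ring
  rw [hI1, hI2]
  set x : ℝ := b ^ N with hxdef
  have hfac : ((x * b - 1) / (α ^ 2 * (N + 1)) - (x - 1) / (α ^ 2 * N))
      - ((N : ℝ) / (N + 1)) * ((1 - x) / (α * N)) ^ 2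
      = (x * (1 - x - N * (1 - b))) / (α ^ 2 * N * (N + 1)) := by
    field_simp
    ring
  have hden : (α ^ 2 * N * (N + 1)) ≠ 0 := by positivity
  have hbiff : α = 1 / r ↔ b = 0 := by
    rw [hbdef]
    constructor
    · intro h; rw [h]; field_simp; ring
    · intro h
      have : α * r = 1 := by linarith
      field_simp
      linarith
  constructor
  · intro h
    have hz : x * (1 - x - N * (1 - b)) = 0 := by
      have : ((x * b - 1) / (α ^ 2 * (N + 1)) - (x - 1) / (α ^ 2 * N))
          - ((N : ℝ) / (N + 1)) * ((1 - x) / (α * N)) ^ 2 = 0 := by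
        rw [h]; ring
      rw [hfac] at this
      exact (div_eq_zero_iff.mp this).resolve_right hden
    rw [hbiff]
    by_contra hb
    have hbpos : 0 < b := lt_of_le_of_ne hb0 (Ne.symm hb)
    have hxpos : 0 < x := by positivity
    have : 1 - x - N * (1 - b) = 0 := by
      rcases mul_eq_zero.mp hz with h' | h'
      · exact absurd h' (ne_of_gt hxpos)
      · exact h'
    have := aux_geom b hbpos hb1 N hN
    rw [hxdef] at *
    linarith
  · intro h
    have hb : b = 0 := hbiff.mp h
    have hx : x = 0 := by
      rw [hxdef, hb]
      exact zero_pow (by omega)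
    rw [hx, hb]
    field_simp
    ring
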